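/- Suppose (i) common embedding support: for all x ∈ X and e ∈ E, p(e|x,π) > 0 implies p(e|x,π₀) > 0, and (ii) No Direct Effect: q(x,a,e) = q̄(x,e) for all a. Then the MIPS estimator is unbiased: E₀[w(x,e)·q(x,a,e)] = V(π), i.e., ∑_{x,a,e} p(x)·π₀(a|x)·φ(e|x,a)·w(x,e)·q̄(x,e) = V(π), where division by zero is interpreted by the convention c/0 = 0. -/
import Mathlib


open Finset

/-- Marginal embedding distribution `p(e|x,π')` of a policy `π'`. -/
noncomputable def pE {X A E : Type*} [Fintype A]
    (π' : X → A → ℝ) (φ : X → A → E → ℝ) (x : X) (e : E) : ℝ :=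
  ∑ a, π' x a * φ x a e

/-- Marginal importance weight `w(x,e) = p(e|x,π)/p(e|x,π₀)` (with `c/0 = 0`). -/
noncomputable def wE {X A E : Type*} [Fintype A]
    (πt π₀ : X → A → ℝ) (φ : X → A → E → ℝ) (x : X) (e : E) : ℝ :=
  pE πt φ x e / pE π₀ φ x e

/-- Expectation under the logging process. -/
noncomputable def E₀ {X A E : Type*} [Fintype X] [Fintype A] [Fintype E]
    (p : X → ℝ) (π₀ : X → A → ℝ) (φ : X → A → E → ℝ) (f : X → A → E → ℝ) : ℝ :=
  ∑ x, ∑ a, ∑ e, p x * π₀ x a * φ x a e * f x a e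

/-- Policy value `V(π)`. -/
noncomputable def Vval {X A E : Type*} [Fintype X] [Fintype A] [Fintype E]
    (p : X → ℝ) (πt : X → A → ℝ) (φ : X → A → E → ℝ) (q : X → A → E → ℝ) : ℝ :=
  ∑ x, ∑ a, ∑ e, p x * πt x a * φ x a e * q x a e

/-- Proposition 2 (unbiasedness of MIPS): under common embedding support and
No Direct Effect, the MIPS estimator is unbiased. -/
theorem mips_unbiased
    {X A E : Type*} [Fintype X] [Fintype A] [Fintype E]
    (p : X → ℝ) (πt π₀ : X → A → ℝ) (φ : X → A → E → ℝ)
    (q : X → A → E → ℝ) (qbar : X → E → ℝ)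
    (hp : ∀ x, 0 ≤ p x) (hp1 : ∑ x, p x = 1)
    (hπt : ∀ x a, 0 ≤ πt x a) (hπt1 : ∀ x, ∑ a, πt x a = 1)
    (hπ₀ : ∀ x a, 0 ≤ π₀ x a) (hπ₀1 : ∀ x, ∑ a, π₀ x a = 1)
    (hφ : ∀ x a e, 0 ≤ φ x a e) (hφ1 : ∀ x a, ∑ e, φ x a e = 1)
    (hsupp : ∀ x e, 0 < pE πt φ x e → 0 < pE π₀ φ x e)
    (hnde : ∀ x a e, q x a e = qbar x e) :
    E₀ p π₀ φ (fun x _ e => wE πt π₀ φ x e * qbar x e) = Vval p πt φ q := by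

  unfold E₀ Vval
  have key : ∀ x : X, (∑ e, pE π₀ φ x e * (wE πt π₀ φ x e * qbar x e))
      = ∑ e, pE πt φ x e * qbar x e := by
    intro x
    refine Finset.sum_congr rfl fun e _ => ?_
    by_cases h : pE π₀ φ x e = 0
    · have hπt0 : pE πt φ x e = 0 := by
        by_contra hne
        have hpos : 0 < pE πt φ x e := lt_of_le_of_ne
          (Finset.sum_nonneg fun a _ => mul_nonneg (hπt x a) (hφ x a e)) (Ne.symm hne)
        exact absurd (hsupp x e hpos) (by simp [h])
      simp [h, hπt0]
    · rw [wE, div_mul_eq_mul_div, mul_div_assoc', mul_comm,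
        mul_div_assoc, div_self h, mul_one]
  calc (∑ x, ∑ a, ∑ e, p x * π₀ x a * φ x a e * (wE πt π₀ φ x e * qbar x e))
      = ∑ x, p x * ∑ e, pE π₀ φ x e * (wE πt π₀ φ x e * qbar x e) := by
        refine Finset.sum_congr rfl fun x _ => ?_
        rw [Finset.mul_sum, Finset.sum_comm]
        refine Finset.sum_congr rfl fun e _ => ?_
        rw [pE, Finset.sum_mul, Finset.mul_sum]
        exact Finset.sum_congr rfl fun a _ => by ring
    _ = ∑ x, p x * ∑ e, pE πt φ x e * qbar x e := by
        exact Finset.sum_congr rfl fun x _ => by rw [key]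
    _ = ∑ x, ∑ a, ∑ e, p x * πt x a * φ x a e * q x a e := by
        refine Finset.sum_congr rfl fun x _ => ?_
        rw [Finset.mul_sum, Finset.sum_comm]
        refine Finset.sum_congr rfl fun e _ => ?_
        rw [pE, Finset.sum_mul, Finset.mul_sum]
        exact Finset.sum_congr rfl fun a _ => by rw [hnde]; ring
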